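/- (Diamond Lemma) Let Φ be a crystallographic root system with Weyl group W and Hessenberg set 𝔥. Suppose v covers w in Bruhat order, s_i is a simple reflection with ℓ(s_i w) = ℓ(w) + 1 = ℓ(v), and s_i w ≠ v. Then s_i v > v with ℓ(s_i v) = ℓ(s_i w) + 1, and moreover the edge w → v belongs to the Hessenberg graph Γ_𝔥 if and only if the edge s_i w → s_i v belongs to Γ_𝔥. -/

import Mathlib

open scoped RealInnerProductSpace Pointwise

noncomputable section

/-- Euclidean `n`-space, the ambient space of the root system. -/
abbrev EV (n : ℕ) := EuclideanSpace ℝ (Fin n)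

/-- The (orthogonal) reflection in the hyperplane orthogonal to `α`. -/
def sRefl {n : ℕ} (α : EV n) : EV n ≃ₗᵢ[ℝ] EV n :=
  Submodule.reflection ((ℝ ∙ α)ᗮ)

/-- A finite crystallographic root system in `ℝⁿ`, together with a choice of
positive roots and a base of simple roots. -/
structure BasedRootSystem (n : ℕ) where
  /-- the set of roots -/
  Φ : Set (EV n)
  /-- the positive roots -/
  pos : Set (EV n)
  /-- the base of simple roots -/
  Δ : Set (EV n)
  finite : Φ.Finite
  nonzero : ∀ α ∈ Φ, α ≠ 0
  reduced : ∀ α ∈ Φ, ∀ c : ℝ, c • α ∈ Φ → c = 1 ∨ c = -1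
  reflect_mem : ∀ α ∈ Φ, ∀ β ∈ Φ, sRefl α β ∈ Φ
  cartan_int : ∀ α ∈ Φ, ∀ β ∈ Φ, ∃ m : ℤ, (m : ℝ) = 2 * ⟪α, β⟫ / ⟪α, α⟫
  pos_sub : pos ⊆ Φ
  pos_union : Φ = pos ∪ (-pos)
  pos_disj : pos ∩ (-pos) = ∅
  Δ_sub : Δ ⊆ pos
  Δ_indep : LinearIndependent ℝ ((↑) : Δ → EV n)
  Δ_span : Submodule.span ℝ Δ = ⊤
  pos_combo : ∀ α ∈ pos, α ∈ AddSubmonoid.closure Δ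

namespace BasedRootSystem

variable {n : ℕ} (R : BasedRootSystem n)

/-- The root order: `α ≺ β` iff `β - α` is a nonempty sum of positive roots. -/
def prec (a b : EV n) : Prop :=
  a ≠ b ∧ b - a ∈ AddSubmonoid.closure R.pos

/-- An ideal of the positive roots: upward closed for the root order. -/
def IsIdeal (I : Set (EV n)) : Prop :=
  I ⊆ R.pos ∧ ∀ β ∈ I, ∀ α ∈ R.pos, R.prec β α → α ∈ I

/-- A Hessenberg set: the complement in `Φ⁺` of an ideal. -/
def IsHess (h : Set (EV n)) : Prop :=
  h ⊆ R.pos ∧ R.IsIdeal (R.pos \ h)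

/-- The Weyl group, generated by the reflections in the roots. -/
def Weyl : Subgroup (EV n ≃ₗᵢ[ℝ] EV n) :=
  Subgroup.closure {g | ∃ α ∈ R.Φ, g = sRefl α}

/-- Application of a Weyl group element to a vector. -/
def ap (w : R.Weyl) (x : EV n) : EV n := (w : EV n ≃ₗᵢ[ℝ] EV n) x

/-- The inversion set `N_w = {α ∈ Φ⁺ : w⁻¹ α ∈ Φ⁻}`. -/
def N (w : R.Weyl) : Set (EV n) := {α | α ∈ R.pos ∧ R.ap w⁻¹ α ∈ -R.pos}

/-- The length of a Weyl group element, `ℓ(w) = |N_w|`. -/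
def len (w : R.Weyl) : ℕ := (R.N w).ncard

/-- The `𝔥`-inversion set `N_w^𝔥 = {α ∈ Φ⁺ : w⁻¹ α ∈ -𝔥}`. -/
def Nh (h : Set (EV n)) (w : R.Weyl) : Set (EV n) :=
  {α | α ∈ R.pos ∧ R.ap w⁻¹ α ∈ -h}

/-- `ℓ_𝔥(w) = |N_w^𝔥|`, the number of Hessenberg edges ending at `w`. -/
def lenh (h : Set (EV n)) (w : R.Weyl) : ℕ := (R.Nh h w).ncard

/-- `v` covers `w` in Bruhat order: `v = s_α w` with `ℓ(v) = ℓ(w) + 1`. -/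
def Covers (v w : R.Weyl) : Prop :=
  ∃ α ∈ R.pos, (v : EV n ≃ₗᵢ[ℝ] EV n) = sRefl α * (w : EV n ≃ₗᵢ[ℝ] EV n) ∧
    R.len v = R.len w + 1

/-- Bruhat order: the transitive closure of the relations `w < s_α w`
whenever the length increases. -/
def bruhatLt (w v : R.Weyl) : Prop :=
  Relation.TransGen (fun u u' : R.Weyl =>
    ∃ α ∈ R.pos, (u' : EV n ≃ₗᵢ[ℝ] EV n) = sRefl α * (u : EV n ≃ₗᵢ[ℝ] EV n) ∧
      R.len u < R.len u') w v

/-- The edge relation of the Hessenberg graph `Γ_𝔥`: `u → w` when `w = s_α u`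
with `α ∈ Φ⁺` and `w⁻¹ α ∈ -𝔥`. -/
def Edge (h : Set (EV n)) (u w : R.Weyl) : Prop :=
  ∃ α ∈ R.pos, (w : EV n ≃ₗᵢ[ℝ] EV n) = sRefl α * (u : EV n ≃ₗᵢ[ℝ] EV n) ∧
    R.ap w⁻¹ α ∈ -h

/-- The flow-up (reachability) order of the Hessenberg graph. -/
def flowLe (h : Set (EV n)) (x y : R.Weyl) : Prop :=
  Relation.ReflTransGen (R.Edge h) x y

/-- The strict flow-up order. -/
def flowLt (h : Set (EV n)) (x y : R.Weyl) : Prop :=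
  Relation.TransGen (R.Edge h) x y

/-- The linear polynomial in `ℝ[Δ] = ℝ[x₁,…,xₙ]` corresponding to a vector. -/
def lin (α : EV n) : MvPolynomial (Fin n) ℝ :=
  ∑ i, MvPolynomial.C (α i) * MvPolynomial.X i

/-- The action of an isometry `w` on the polynomial ring, induced by the
linear action on the ambient space: it sends `lin α` to `lin (w α)`. -/
def polyAct (w : EV n ≃ₗᵢ[ℝ] EV n) :
    MvPolynomial (Fin n) ℝ →ₐ[ℝ] MvPolynomial (Fin n) ℝ :=
  MvPolynomial.aeval fun i => lin (w (EuclideanSpace.single i 1))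

/-- The dot action of the Weyl group on `Maps(W, ℝ[Δ])`:
`(w · P)(u) = w (P (w⁻¹ u))`. -/
def dot (w : R.Weyl) (P : R.Weyl → MvPolynomial (Fin n) ℝ) :
    R.Weyl → MvPolynomial (Fin n) ℝ :=
  fun u => polyAct (w : EV n ≃ₗᵢ[ℝ] EV n) (P (w⁻¹ * u))

/-- Membership in the GKM ring `H_T^*(𝔥)`: the GKM conditions
`P(w) - P(s_α w) ∈ ⟨α⟩` along all edges of `Γ_𝔥`. -/
def GKM (h : Set (EV n)) (P : R.Weyl → MvPolynomial (Fin n) ℝ) : Prop :=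
  ∀ u w : R.Weyl, ∀ α ∈ R.pos,
    (w : EV n ≃ₗᵢ[ℝ] EV n) = sRefl α * (u : EV n ≃ₗᵢ[ℝ] EV n) →
    R.ap w⁻¹ α ∈ -h → P w - P u ∈ Ideal.span {lin α}

/-- The product `∏_{α ∈ S} α` (over `S ∩ Φ`) as an element of `ℝ[Δ]`. -/
def prodRoots (S : Set (EV n)) : MvPolynomial (Fin n) ℝ :=
  ∏ α ∈ (R.finite.inter_of_right S).toFinset, lin α

/-- A flow-up class at `x`: homogeneous of degree `ℓ_𝔥(x)`, with
`P(x) = ∏_{α ∈ N_x^𝔥} α`, supported on the flow-up of `x`, and satisfying the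
GKM conditions. -/
def IsFlowUp (h : Set (EV n)) (x : R.Weyl)
    (P : R.Weyl → MvPolynomial (Fin n) ℝ) : Prop :=
  R.GKM h P ∧ (∀ y, (P y).IsHomogeneous (R.lenh h x)) ∧
    P x = R.prodRoots (R.Nh h x) ∧ ∀ y, P y ≠ 0 → R.flowLe h x y

/-- Irreducibility: the roots admit no splitting into two nonempty mutually
orthogonal parts. -/
def IsIrreducible : Prop :=
  ∀ Ψ Ψ' : Set (EV n), Ψ ∪ Ψ' = R.Φ → (∀ a ∈ Ψ, ∀ b ∈ Ψ', ⟪a, b⟫ = 0) →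
    Ψ = ∅ ∨ Ψ' = ∅

/-- `γ` is the highest root: `α ⪯ γ` for every root `α`. -/
def IsHighest (γ : EV n) : Prop :=
  γ ∈ R.pos ∧ ∀ α ∈ R.Φ, α = γ ∨ R.prec α γ

end BasedRootSystem


-- ===================== auxiliary development =====================

section Aux

lemma sRefl_formula {n : ℕ} (α x : EV n) (hα : α ≠ 0) :
    sRefl α x = x - (2 * ⟪α, x⟫ / ⟪α, α⟫) • α := by
  have hαα : ⟪α, α⟫ ≠ 0 := inner_self_ne_zero.2 hα
  set c : ℝ := ⟪α, x⟫ / ⟪α, α⟫ with hc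
  have h1 : sRefl α (c • α) = -(c • α) := by
    rw [map_smul]
    rw [show (sRefl α) α = -α from Submodule.reflection_orthogonalComplement_singleton_eq_neg α, smul_neg]
  have h2 : sRefl α (x - c • α) = x - c • α := by
    apply Submodule.reflection_mem_subspace_eq_self
    rw [Submodule.mem_orthogonal_singleton_iff_inner_right]
    rw [inner_sub_right, real_inner_smul_right, hc, div_mul_cancel₀ _ hαα, sub_self]
  have := congrArg₂ (· + ·) h2 h1
  simp only [← map_add, sub_add_cancel] at this
  rw [this, hc]
  match_scalars
  field_simp
  ring

lemma sRefl_self {n : ℕ} (α : EV n) : sRefl α α = -α :=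
  Submodule.reflection_orthogonalComplement_singleton_eq_neg α

lemma sRefl_inv {n : ℕ} (α : EV n) : (sRefl α)⁻¹ = sRefl α := by
  rw [LinearIsometryEquiv.inv_def, sRefl, Submodule.reflection_symm]

lemma sRefl_mul_self {n : ℕ} (α : EV n) : sRefl α * sRefl α = 1 := by
  nth_rewrite 1 [← sRefl_inv α]
  exact inv_mul_cancel _

lemma sRefl_sRefl {n : ℕ} (α x : EV n) : sRefl α (sRefl α x) = x := by
  have := congrArg (fun f => (f : EV n ≃ₗᵢ[ℝ] EV n) x) (sRefl_mul_self α)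
  simpa using this

lemma sRefl_conj {n : ℕ} (g : EV n ≃ₗᵢ[ℝ] EV n) (β : EV n) (hβ : β ≠ 0) :
    sRefl (g β) = g * sRefl β * g⁻¹ := by
  have hgβ : g β ≠ 0 := by
    intro h; exact hβ (by simpa using congrArg g.symm h)
  ext x
  have h1 : (g * sRefl β * g⁻¹) x = g (sRefl β (g.symm x)) := rfl
  rw [h1, sRefl_formula β _ hβ, sRefl_formula (g β) x hgβ, map_sub, map_smul]
  have h2 : ⟪β, g.symm x⟫ = ⟪g β, x⟫ := by
    conv_rhs => rw [show x = g (g.symm x) by simp]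
    rw [g.inner_map_map]
  have h3 : ⟪g β, g β⟫ = ⟪β, β⟫ := g.inner_map_map β β
  rw [h2, h3, g.apply_symm_apply]

namespace BasedRootSystem

variable {n : ℕ} (R : BasedRootSystem n)

lemma not_both {α : EV n} (h1 : α ∈ R.pos) (h2 : α ∈ -R.pos) : False :=
  Set.eq_empty_iff_forall_notMem.mp R.pos_disj α ⟨h1, h2⟩

lemma dich {α : EV n} (h : α ∈ R.Φ) : α ∈ R.pos ∨ α ∈ -R.pos := by
  rw [R.pos_union] at h; exact h

lemma pos_ne_zero {α : EV n} (h : α ∈ R.pos) : α ≠ 0 := R.nonzero α (R.pos_sub h)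

lemma negpos_mem_Φ {α : EV n} (h : α ∈ -R.pos) : α ∈ R.Φ := by
  rw [R.pos_union]; exact Or.inr h

lemma neg_mem_negpos {α : EV n} (h : α ∈ R.pos) : -α ∈ -R.pos := by
  simpa using h

lemma mem_negpos_iff {α : EV n} : α ∈ -R.pos ↔ -α ∈ R.pos := Set.mem_neg

lemma ap_neg (w : R.Weyl) (x : EV n) : R.ap w (-x) = -(R.ap w x) :=
  map_neg (w : EV n ≃ₗᵢ[ℝ] EV n) x

lemma ap_add (u : R.Weyl) (x y : EV n) : R.ap u (x + y) = R.ap u x + R.ap u y :=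
  map_add (u : EV n ≃ₗᵢ[ℝ] EV n) x y

lemma ap_smul (u : R.Weyl) (c : ℝ) (x : EV n) : R.ap u (c • x) = c • R.ap u x :=
  map_smul (u : EV n ≃ₗᵢ[ℝ] EV n) c x

/-- The basis of simple roots. -/
def bas : Module.Basis R.Δ ℝ (EV n) :=
  Module.Basis.mk R.Δ_indep (by rw [Subtype.range_coe, R.Δ_span])

lemma bas_apply (d : R.Δ) : R.bas d = (d : EV n) := Module.Basis.mk_apply _ _ _

lemma repr_nonneg_of_closure {x : EV n} (hx : x ∈ AddSubmonoid.closure R.Δ) (d : R.Δ) :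
    0 ≤ R.bas.repr x d := by
  classical
  induction hx using AddSubmonoid.closure_induction with
  | mem y hy =>
      have : y = R.bas ⟨y, hy⟩ := (R.bas_apply ⟨y, hy⟩).symm
      rw [this, Module.Basis.repr_self, Finsupp.single_apply]
      split <;> norm_num
  | zero => simp
  | add x y _ _ ihx ihy => rw [map_add]; exact add_nonneg ihx ihy

lemma pos_repr_nonneg {α : EV n} (hα : α ∈ R.pos) (d : R.Δ) : 0 ≤ R.bas.repr α d :=
  R.repr_nonneg_of_closure (R.pos_combo α hα) d

lemma negpos_repr_nonpos {α : EV n} (hα : α ∈ -R.pos) (d : R.Δ) : R.bas.repr α d ≤ 0 := by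
  have := R.pos_repr_nonneg (R.mem_negpos_iff.mp hα) d
  rw [map_neg] at this
  simpa using this

lemma eq_zero_of_repr {x : EV n} (h : ∀ d, R.bas.repr x d = 0) : x = 0 := by
  have : R.bas.repr x = 0 := Finsupp.ext h
  have := congrArg R.bas.repr.symm this
  simpa using this

lemma exists_repr_pos {α : EV n} (hα : α ∈ R.pos) : ∃ d, 0 < R.bas.repr α d := by
  by_contra hcon
  push_neg at hcon
  apply R.pos_ne_zero hα
  apply R.eq_zero_of_repr
  intro d
  exact le_antisymm (hcon d) (R.pos_repr_nonneg hα d)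

lemma mapsto_Φ {g : EV n ≃ₗᵢ[ℝ] EV n} (hg : g ∈ R.Weyl) :
    ∀ α ∈ R.Φ, g α ∈ R.Φ := by
  induction hg using Subgroup.closure_induction with
  | mem g hg =>
      obtain ⟨β, hβ, rfl⟩ := hg
      intro α hα
      exact R.reflect_mem β hβ α hα
  | one => intro α hα; simpa using hα
  | mul g g' _ _ ihg ihg' =>
      intro α hα
      have : (g * g') α = g (g' α) := rfl
      rw [this]
      exact ihg _ (ihg' _ hα)
  | inv g _ ihg =>
      intro α hα
      have hmaps : Set.MapsTo (⇑g) R.Φ R.Φ := fun x hx => ihg x hx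
      have hinj : Set.InjOn (⇑g) R.Φ := fun x _ y _ h => g.injective h
      have hbij : Set.BijOn (⇑g) R.Φ R.Φ :=
        (Set.Finite.injOn_iff_bijOn_of_mapsTo R.finite hmaps).mp hinj
      obtain ⟨x, hx, hgx⟩ := hbij.surjOn hα
      have : g⁻¹ α = x := by
        have : g.symm (g x) = g.symm α := congrArg g.symm hgx
        simpa using this.symm
      rw [this]; exact hx

lemma ap_mem_Φ (w : R.Weyl) {α : EV n} (hα : α ∈ R.Φ) : R.ap w α ∈ R.Φ :=
  R.mapsto_Φ w.2 α hα

lemma ap_inv_mul {v w : R.Weyl} {β : EV n}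
    (hv : (v : EV n ≃ₗᵢ[ℝ] EV n) = sRefl β * (w : EV n ≃ₗᵢ[ℝ] EV n)) (α : EV n) :
    R.ap v⁻¹ α = R.ap w⁻¹ (sRefl β α) := by
  have h1 : ((v⁻¹ : R.Weyl) : EV n ≃ₗᵢ[ℝ] EV n) = (v : EV n ≃ₗᵢ[ℝ] EV n)⁻¹ := rfl
  have h2 : ((w⁻¹ : R.Weyl) : EV n ≃ₗᵢ[ℝ] EV n) = (w : EV n ≃ₗᵢ[ℝ] EV n)⁻¹ := rfl
  have h3 : (v : EV n ≃ₗᵢ[ℝ] EV n)⁻¹ = (w : EV n ≃ₗᵢ[ℝ] EV n)⁻¹ * sRefl β := by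
    rw [hv, mul_inv_rev, sRefl_inv]
  show ((v⁻¹ : R.Weyl) : EV n ≃ₗᵢ[ℝ] EV n) α = _
  rw [h1, h3]; rfl

lemma sRefl_simple_pos {αi β : EV n} (hαi : αi ∈ R.Δ) (hβ : β ∈ R.pos) (hne : β ≠ αi) :
    sRefl αi β ∈ R.pos := by
  classical
  have hαpos : αi ∈ R.pos := R.Δ_sub hαi
  have hαΦ : αi ∈ R.Φ := R.pos_sub hαpos
  have hα0 : αi ≠ 0 := R.nonzero _ hαΦ
  have hβΦ : β ∈ R.Φ := R.pos_sub hβ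
  have hγΦ : sRefl αi β ∈ R.Φ := R.reflect_mem αi hαΦ β hβΦ
  rcases R.dich hγΦ with hcase | hcase
  · exact hcase
  exfalso
  set i0 : R.Δ := ⟨αi, hαi⟩ with hi0
  set c : ℝ := 2 * ⟪αi, β⟫ / ⟪αi, αi⟫ with hc
  have hform : sRefl αi β = β - c • αi := sRefl_formula αi β hα0
  have hreprαi : R.bas.repr αi = Finsupp.single i0 1 := by
    have : αi = R.bas i0 := (R.bas_apply i0).symm
    rw [this, Module.Basis.repr_self]
  have hrepr : ∀ d : R.Δ, d ≠ i0 → R.bas.repr (sRefl αi β) d = R.bas.repr β d := by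
    intro d hd
    rw [hform, map_sub, map_smul, hreprαi]
    simp [Finsupp.single_apply, if_neg (Ne.symm hd)]
  by_cases hex : ∃ d : R.Δ, d ≠ i0 ∧ R.bas.repr β d ≠ 0
  · obtain ⟨d, hd, hdne⟩ := hex
    have h1 : 0 < R.bas.repr β d := lt_of_le_of_ne (R.pos_repr_nonneg hβ d) (Ne.symm hdne)
    have h2 := R.negpos_repr_nonpos hcase d
    rw [hrepr d hd] at h2
    linarith
  · push_neg at hex
    set t : ℝ := R.bas.repr β i0 with ht
    have hβeq : β = t • αi := by
      have hz : β - t • αi = 0 := by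
        apply R.eq_zero_of_repr
        intro d
        rw [map_sub, map_smul, hreprαi]
        by_cases hd : d = i0
        · subst hd; simp [Finsupp.single_apply, ht]
        · simp [Finsupp.single_apply, if_neg (Ne.symm hd), hex d hd]
      have := sub_eq_zero.mp hz
      exact this
    have hmem : t • αi ∈ R.Φ := hβeq ▸ hβΦ
    rcases R.reduced αi hαΦ t hmem with h3 | h3
    · rw [h3, one_smul] at hβeq
      exact hne hβeq
    · rw [h3] at hβeq
      apply R.not_both hβ
      rw [R.mem_negpos_iff, hβeq]
      simpa using hαpos

lemma N_finite (w : R.Weyl) : (R.N w).Finite :=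
  R.finite.subset (fun α h => R.pos_sub h.1)

lemma len_simple_up {αi : EV n} (hαi : αi ∈ R.Δ) {w sw : R.Weyl}
    (hsw : (sw : EV n ≃ₗᵢ[ℝ] EV n) = sRefl αi * (w : EV n ≃ₗᵢ[ℝ] EV n))
    (hw : R.ap w⁻¹ αi ∈ R.pos) : R.len sw = R.len w + 1 := by
  have hαpos : αi ∈ R.pos := R.Δ_sub hαi
  have hαΦ : αi ∈ R.Φ := R.pos_sub hαpos
  have key : R.N sw = insert αi ((sRefl αi) '' (R.N w)) := by
    ext α
    constructor
    · rintro ⟨hα, hneg⟩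
      rw [R.ap_inv_mul hsw] at hneg
      by_cases heq : α = αi
      · exact Or.inl heq
      · right
        refine ⟨sRefl αi α, ⟨?_, ?_⟩, sRefl_sRefl αi α⟩
        · exact R.sRefl_simple_pos hαi hα heq
        · exact hneg
    · rintro (rfl | ⟨γ, ⟨hγpos, hγneg⟩, rfl⟩)
      · refine ⟨hαpos, ?_⟩
        rw [R.ap_inv_mul hsw, sRefl_self, R.ap_neg]
        exact R.neg_mem_negpos hw
      · have hγne : γ ≠ αi := by
          rintro rfl
          exact R.not_both hw hγneg
        refine ⟨R.sRefl_simple_pos hαi hγpos hγne, ?_⟩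
        rwa [R.ap_inv_mul hsw, sRefl_sRefl]
  have hnotmem : αi ∉ (sRefl αi) '' (R.N w) := by
    rintro ⟨γ, ⟨hγpos, _⟩, hγeq⟩
    have : γ = sRefl αi αi := by
      have h := congrArg (sRefl αi) hγeq
      rw [sRefl_sRefl] at h
      exact h
    rw [sRefl_self] at this
    subst this
    exact R.not_both hγpos (R.neg_mem_negpos hαpos)
  have hfin : ((sRefl αi) '' (R.N w)).Finite := (R.N_finite w).image _
  rw [len, len, key, Set.ncard_insert_of_notMem hnotmem hfin,
    Set.ncard_image_of_injective _ (sRefl αi).injective]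

lemma len_simple_down {αi : EV n} (hαi : αi ∈ R.Δ) {w sw : R.Weyl}
    (hsw : (sw : EV n ≃ₗᵢ[ℝ] EV n) = sRefl αi * (w : EV n ≃ₗᵢ[ℝ] EV n))
    (hw : R.ap w⁻¹ αi ∈ -R.pos) : R.len w = R.len sw + 1 := by
  have hw' : (w : EV n ≃ₗᵢ[ℝ] EV n) = sRefl αi * (sw : EV n ≃ₗᵢ[ℝ] EV n) := by
    rw [hsw, ← mul_assoc, sRefl_mul_self, one_mul]
  apply R.len_simple_up hαi hw'
  have h2 : R.ap sw⁻¹ αi = -(R.ap w⁻¹ αi) := by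
    rw [R.ap_inv_mul hsw, sRefl_self, R.ap_neg]
  rw [h2]
  exact R.mem_negpos_iff.mp hw

lemma len_lt_of_inv_pos {β : EV n} (hβ : β ∈ R.pos) {w v : R.Weyl}
    (hv : (v : EV n ≃ₗᵢ[ℝ] EV n) = sRefl β * (w : EV n ≃ₗᵢ[ℝ] EV n))
    (hwβ : R.ap w⁻¹ β ∈ R.pos) : R.len w < R.len v := by
  classical
  have hβΦ : β ∈ R.Φ := R.pos_sub hβ
  have hβ0 : β ≠ 0 := R.pos_ne_zero hβ
  set A : Set (EV n) := R.N w with hA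
  set B : Set (EV n) := {α ∈ R.pos | sRefl β α ∈ -R.pos} with hB
  set ψ : EV n → EV n := fun α => -(sRefl β α) with hψ
  have hψdef : ∀ x, ψ x = -(sRefl β x) := fun _ => rfl
  have hψinj : Function.Injective ψ := fun x y hxy =>
    (sRefl β).injective (neg_injective hxy)
  have hsΦ : ∀ {α : EV n}, α ∈ R.Φ → sRefl β α ∈ R.Φ := fun hα => R.reflect_mem β hβΦ _ hα
  have hNv : ∀ α : EV n, α ∈ R.N v ↔ α ∈ R.pos ∧ R.ap w⁻¹ (sRefl β α) ∈ -R.pos := by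
    intro α
    constructor
    · rintro ⟨h1, h2⟩; rw [R.ap_inv_mul hv] at h2; exact ⟨h1, h2⟩
    · rintro ⟨h1, h2⟩; exact ⟨h1, by rw [R.ap_inv_mul hv]; exact h2⟩
  have hdecomp : R.N v = (sRefl β) '' (A \ B) ∪ ψ '' (B \ A) := by
    ext α
    rw [hNv]
    constructor
    · rintro ⟨hα, hneg⟩
      have hsαΦ : sRefl β α ∈ R.Φ := hsΦ (R.pos_sub hα)
      rcases R.dich hsαΦ with hs | hs
      · left
        refine ⟨sRefl β α, ⟨⟨hs, hneg⟩, ?_⟩, sRefl_sRefl β α⟩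
        rintro ⟨-, h2⟩
        rw [sRefl_sRefl] at h2
        exact R.not_both hα h2
      · right
        refine ⟨-(sRefl β α), ⟨⟨?_, ?_⟩, ?_⟩, ?_⟩
        · exact R.mem_negpos_iff.mp hs
        · rw [map_neg, sRefl_sRefl]
          exact R.neg_mem_negpos hα
        · rintro ⟨-, h2⟩
          rw [R.ap_neg] at h2
          exact R.not_both (R.mem_negpos_iff.mp hneg) h2
        · rw [hψdef, map_neg, sRefl_sRefl, neg_neg]
    · rintro (⟨γ, ⟨⟨hγpos, hγneg⟩, hγB⟩, rfl⟩ | ⟨γ, ⟨⟨hγpos, hγs⟩, hγA⟩, rfl⟩)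
      · constructor
        · have hsγΦ : sRefl β γ ∈ R.Φ := hsΦ (R.pos_sub hγpos)
          rcases R.dich hsγΦ with hs | hs
          · exact hs
          · exact absurd ⟨hγpos, hs⟩ hγB
        · rw [sRefl_sRefl]
          exact hγneg
      · constructor
        · rw [hψdef]
          exact R.mem_negpos_iff.mp hγs
        · rw [hψdef, map_neg, sRefl_sRefl, R.ap_neg]
          have hγΦ : R.ap w⁻¹ γ ∈ R.Φ := R.ap_mem_Φ _ (R.pos_sub hγpos)
          rcases R.dich hγΦ with hh | hh
          · exact R.neg_mem_negpos hh
          · exact absurd ⟨hγpos, hh⟩ hγA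
  have hdisj : Disjoint ((sRefl β) '' (A \ B)) (ψ '' (B \ A)) := by
    rw [Set.disjoint_left]
    rintro x ⟨γ, ⟨⟨hγ1, -⟩, -⟩, rfl⟩ ⟨γ', ⟨⟨hγ'1, -⟩, -⟩, heq⟩
    have h1 := congrArg (sRefl β) heq
    rw [sRefl_sRefl, hψdef, map_neg, sRefl_sRefl] at h1
    exact R.not_both hγ'1 (R.mem_negpos_iff.mpr (h1 ▸ hγ1))
  have hfinA : A.Finite := R.N_finite w
  have hfinB : B.Finite := R.finite.subset (fun α hα => R.pos_sub hα.1)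
  have hpair : ∀ γ ∈ A ∩ B, ψ γ ∈ B \ A := by
    rintro γ ⟨⟨hγpos, hγw⟩, ⟨-, hγs⟩⟩
    refine ⟨⟨R.mem_negpos_iff.mp hγs, ?_⟩, ?_⟩
    · rw [hψdef, map_neg, sRefl_sRefl]
      exact R.neg_mem_negpos hγpos
    · rintro ⟨-, hψw⟩
      set c : ℝ := 2 * ⟪β, γ⟫ / ⟪β, β⟫ with hc
      have hsum : γ + ψ γ = c • β := by
        rw [hψdef, sRefl_formula β γ hβ0, hc]
        match_scalars <;> ring
      have hcpos : 0 < c := by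
        rcases lt_or_ge 0 c with hle | hle
        · exact hle
        · exfalso
          have hform : sRefl β γ = γ + (-c) • β := by
            rw [sRefl_formula β γ hβ0, hc]
            match_scalars <;> ring
          have hnz : sRefl β γ ≠ 0 := R.nonzero _ (hsΦ (R.pos_sub hγpos))
          apply hnz
          apply R.eq_zero_of_repr
          intro d
          have h1 : R.bas.repr (sRefl β γ) d ≤ 0 := R.negpos_repr_nonpos hγs d
          have h2 : 0 ≤ R.bas.repr (sRefl β γ) d := by
            rw [hform, map_add, map_smul]
            have e1 := R.pos_repr_nonneg hγpos d
            have e2 := R.pos_repr_nonneg hβ d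
            simp only [Finsupp.coe_add, Finsupp.coe_smul, Pi.add_apply, Pi.smul_apply,
              smul_eq_mul]
            nlinarith
          linarith
      obtain ⟨d, hd⟩ := R.exists_repr_pos hwβ
      have h1 : R.ap w⁻¹ γ + R.ap w⁻¹ (ψ γ) = c • R.ap w⁻¹ β := by
        rw [← R.ap_add, hsum, R.ap_smul]
      have h2 : R.bas.repr (R.ap w⁻¹ γ) d ≤ 0 := R.negpos_repr_nonpos hγw d
      have h3 : R.bas.repr (R.ap w⁻¹ (ψ γ)) d ≤ 0 := R.negpos_repr_nonpos hψw d
      have h4 := congrArg (fun x => R.bas.repr x d) h1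
      simp only [map_add, map_smul, Finsupp.coe_add, Finsupp.coe_smul, Pi.add_apply,
        Pi.smul_apply, smul_eq_mul] at h4
      nlinarith
  have hβBA : β ∈ B \ A := by
    refine ⟨⟨hβ, ?_⟩, ?_⟩
    · rw [sRefl_self]
      exact R.neg_mem_negpos hβ
    · rintro ⟨-, h2⟩
      exact R.not_both hwβ h2
  have hcard1 : (R.N v).ncard = (A \ B).ncard + (B \ A).ncard := by
    rw [hdecomp, Set.ncard_union_eq hdisj ((hfinA.diff).image _) ((hfinB.diff).image _),
      Set.ncard_image_of_injective _ (sRefl β).injective, Set.ncard_image_of_injective _ hψinj]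
  have hβnot : β ∉ ψ '' (A ∩ B) := by
    rintro ⟨γ, hγ, heq⟩
    have h1 := congrArg (sRefl β) heq
    rw [hψdef, map_neg, sRefl_sRefl, sRefl_self] at h1
    have hγβ : γ = β := neg_injective h1
    subst hγβ
    exact R.not_both hwβ hγ.1.2
  have hsub : insert β (ψ '' (A ∩ B)) ⊆ B \ A := by
    rintro x (rfl | ⟨γ, hγ, rfl⟩)
    · exact hβBA
    · exact hpair γ hγ
  have hcard2 : (A ∩ B).ncard + 1 ≤ (B \ A).ncard := by
    have h1 : (insert β (ψ '' (A ∩ B))).ncard ≤ (B \ A).ncard :=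
      Set.ncard_le_ncard hsub (hfinB.diff)
    rw [Set.ncard_insert_of_notMem hβnot ((hfinA.inter_of_left _).image _),
      Set.ncard_image_of_injective _ hψinj] at h1
    omega
  have hcard3 : A.ncard = (A \ B).ncard + (A ∩ B).ncard := by
    rw [← Set.ncard_union_eq Set.disjoint_sdiff_inter (hfinA.diff) (hfinA.inter_of_left _),
      Set.diff_union_inter]
  show (R.N w).ncard < (R.N v).ncard
  rw [← hA, hcard1]
  omega

lemma refl_root_eq {α β : EV n} (hα : α ∈ R.pos) (hβ : β ∈ R.pos)
    (h : sRefl α = sRefl β) : α = β := by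
  have hα0 : α ≠ 0 := R.pos_ne_zero hα
  have hβ0 : β ≠ 0 := R.pos_ne_zero hβ
  have h1 : sRefl β α = -α := by rw [← h, sRefl_self]
  rw [sRefl_formula β α hβ0] at h1
  set c : ℝ := 2 * ⟪β, α⟫ / ⟪β, β⟫ with hc
  have h2 : α = (c/2) • β := by
    have e1 : α = -α + c • β := sub_eq_iff_eq_add.mp h1
    have e2 : (2:ℝ) • α = c • β := by
      rw [two_smul]
      nth_rewrite 1 [e1]
      abel
    have e3 := congrArg (fun y : EV n => ((2:ℝ)⁻¹) • y) e2
    simp only [smul_smul] at e3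
    norm_num at e3
    rw [e3]
    match_scalars
    ring
  have hmem : (c/2) • β ∈ R.Φ := h2 ▸ R.pos_sub hα
  rcases R.reduced β (R.pos_sub hβ) (c/2) hmem with h3 | h3
  · rw [h2, h3, one_smul]
  · exfalso
    rw [h2, h3] at hα
    apply R.not_both hβ
    rw [R.mem_negpos_iff]
    simpa using hα

end BasedRootSystem

end Aux

open BasedRootSystem in
/-- (Diamond Lemma) If `v = s_β w` covers `w`, `s_i` is a simple reflection with
`ℓ(s_i w) = ℓ(w) + 1 = ℓ(v)` and `s_i w ≠ v`, then `s_i v > v` with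
`ℓ(s_i v) = ℓ(s_i w) + 1`, and the edge `w → v` lies in `Γ_𝔥` iff the edge
`s_i w → s_i v` does. -/
theorem diamond_lemma {n : ℕ} (R : BasedRootSystem n) (h : Set (EV n))
    (hh : R.IsHess h) (v w sw sv : R.Weyl) (β : EV n) (hβ : β ∈ R.pos)
    (hv : (v : EV n ≃ₗᵢ[ℝ] EV n) = sRefl β * (w : EV n ≃ₗᵢ[ℝ] EV n))
    (hlen : R.len v = R.len w + 1) (αi : EV n) (hαi : αi ∈ R.Δ)
    (hsw : (sw : EV n ≃ₗᵢ[ℝ] EV n) = sRefl αi * (w : EV n ≃ₗᵢ[ℝ] EV n))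
    (hsv : (sv : EV n ≃ₗᵢ[ℝ] EV n) = sRefl αi * (v : EV n ≃ₗᵢ[ℝ] EV n))
    (hlsw : R.len sw = R.len w + 1) (hne : sw ≠ v) :
    R.bruhatLt v sv ∧ R.len sv = R.len sw + 1 ∧
      (R.Edge h w v ↔ R.Edge h sw sv) := by
  have hαipos : αi ∈ R.pos := R.Δ_sub hαi
  have hαiΦ : αi ∈ R.Φ := R.pos_sub hαipos
  have hαi0 : αi ≠ 0 := R.nonzero _ hαiΦ
  have hβΦ : β ∈ R.Φ := R.pos_sub hβ
  have hβ0 : β ≠ 0 := R.pos_ne_zero hβ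
  have hβne : β ≠ αi := by
    rintro rfl
    exact hne (Subtype.coe_injective (hsw.trans hv.symm))
  have hγpos : sRefl αi β ∈ R.pos := R.sRefl_simple_pos hαi hβ hβne
  set γ : EV n := sRefl αi β with hγ
  have hconj : sRefl γ = sRefl αi * sRefl β * (sRefl αi)⁻¹ := sRefl_conj (sRefl αi) β hβ0
  have hsvc : (sv : EV n ≃ₗᵢ[ℝ] EV n) = sRefl γ * (sw : EV n ≃ₗᵢ[ℝ] EV n) := by
    rw [hsv, hv, hsw, hconj, sRefl_inv]
    have h2 := sRefl_mul_self αi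
    calc sRefl αi * (sRefl β * ↑w)
        = sRefl αi * sRefl β * (sRefl αi * sRefl αi) * ↑w := by
          rw [h2]; group
      _ = sRefl αi * sRefl β * sRefl αi * (sRefl αi * ↑w) := by group
  have hwβΦ : R.ap w⁻¹ β ∈ R.Φ := R.ap_mem_Φ _ hβΦ
  have hwβ : R.ap w⁻¹ β ∈ R.pos := by
    rcases R.dich hwβΦ with h1 | h1
    · exact h1
    · exfalso
      have hw' : (w : EV n ≃ₗᵢ[ℝ] EV n) = sRefl β * (v : EV n ≃ₗᵢ[ℝ] EV n) := by
        rw [hv, ← mul_assoc, sRefl_mul_self, one_mul]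
      have hvβ : R.ap v⁻¹ β ∈ R.pos := by
        have e : R.ap v⁻¹ β = -(R.ap w⁻¹ β) := by
          rw [R.ap_inv_mul hv, sRefl_self, R.ap_neg]
        rw [e]
        exact R.mem_negpos_iff.mp h1
      have := R.len_lt_of_inv_pos hβ hw' hvβ
      omega
  have hswγ : R.ap sw⁻¹ γ = R.ap w⁻¹ β := by
    rw [R.ap_inv_mul hsw, hγ, sRefl_sRefl]
  have hsvγβ : R.ap sv⁻¹ γ = R.ap v⁻¹ β := by
    rw [R.ap_inv_mul hsv, hγ, sRefl_sRefl]
  have hvαiΦ : R.ap v⁻¹ αi ∈ R.Φ := R.ap_mem_Φ _ hαiΦ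
  have hvαi : R.ap v⁻¹ αi ∈ R.pos := by
    rcases R.dich hvαiΦ with h1 | h1
    · exact h1
    · exfalso
      have hdown : R.len v = R.len sv + 1 := R.len_simple_down hαi hsv h1
      have hup : R.len sw < R.len sv :=
        R.len_lt_of_inv_pos hγpos hsvc (hswγ ▸ hwβ)
      omega
  have hlsv : R.len sv = R.len sw + 1 := by
    have := R.len_simple_up hαi hsv hvαi
    omega
  refine ⟨?_, hlsv, ?_⟩
  · exact Relation.TransGen.single ⟨αi, hαipos, hsv, by omega⟩
  · constructor
    · rintro ⟨α, hαpos, hα, hmem⟩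
      have hcanc : sRefl α = sRefl β := by
        have e : sRefl α * (w : EV n ≃ₗᵢ[ℝ] EV n) = sRefl β * (w : EV n ≃ₗᵢ[ℝ] EV n) :=
          hα.symm.trans hv
        exact mul_right_cancel e
      have hab : α = β := R.refl_root_eq hαpos hβ hcanc
      subst hab
      exact ⟨γ, hγpos, hsvc, by rw [hsvγβ]; exact hmem⟩
    · rintro ⟨α, hαpos, hα, hmem⟩
      have hcanc : sRefl α = sRefl γ := by
        have e : sRefl α * (sw : EV n ≃ₗᵢ[ℝ] EV n) = sRefl γ * (sw : EV n ≃ₗᵢ[ℝ] EV n) :=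
          hα.symm.trans hsvc
        exact mul_right_cancel e
      have hag : α = γ := R.refl_root_eq hαpos hγpos hcanc
      subst hag
      refine ⟨β, hβ, hv, ?_⟩
      rw [← hsvγβ]
      exact hmem
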